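/- Shearer's inequality for the triangle: Let α, β, γ be nonnegative reals. The inequality H[A,B,C] ≤ α·H[A,B] + β·H[B,C] + γ·H[A,C] holds for every triple (A,B,C) of jointly distributed random variables taking finitely many values if and only if α+β ≥ 1, β+γ ≥ 1 and α+γ ≥ 1. -/
import Mathlib

open Finset

/-- Shannon entropy (base 2) of a probability mass function on a finite type. -/
noncomputable def entropy2 {α : Type*} [Fintype α] (p : α → ℝ) : ℝ :=
  (∑ x, Real.negMulLog (p x)) / Real.log 2

section aux
open Real

private lemma gibbs {ι : Type*} [Fintype ι] (p q : ι → ℝ) (hp : ∀ i, 0 ≤ p i)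
    (hq : ∀ i, 0 ≤ q i) (hsum : ∑ i, q i ≤ ∑ i, p i) (hz : ∀ i, q i = 0 → p i = 0) :
    ∑ i, negMulLog (p i) ≤ ∑ i, -(p i * log (q i)) := by
  have key : ∀ i, negMulLog (p i) ≤ -(p i * log (q i)) + (q i - p i) := by
    intro i
    rcases (hp i).eq_or_lt with h | h
    · simp only [← h, negMulLog_zero, neg_zero, zero_mul, sub_zero, zero_add]
      linarith [hq i]
    · have hqi : 0 < q i := (hq i).lt_of_ne fun e => by
        have := hz i e.symm; linarith
      have hlog : log (q i / p i) ≤ q i / p i - 1 := log_le_sub_one_of_pos (by positivity)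
      rw [log_div hqi.ne' h.ne'] at hlog
      have h2 := mul_le_mul_of_nonneg_left hlog h.le
      have hqp : p i * (q i / p i - 1) = q i - p i := by field_simp
      rw [hqp] at h2
      simp only [negMulLog, neg_mul]
      nlinarith [h2, mul_sub (p i) (log (q i)) (log (p i))]
  calc ∑ i, negMulLog (p i) ≤ ∑ i, (-(p i * log (q i)) + (q i - p i)) :=
        Finset.sum_le_sum fun i _ => key i
    _ = (∑ i, -(p i * log (q i))) + ((∑ i, q i) - ∑ i, p i) := by
        rw [Finset.sum_add_distrib, Finset.sum_sub_distrib]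
    _ ≤ ∑ i, -(p i * log (q i)) := by linarith

private lemma ent_sum_le {ι κ : Type*} [Fintype ι] [Fintype κ] (f : ι → κ → ℝ)
    (h : ∀ i k, 0 ≤ f i k) :
    ∑ i, negMulLog (∑ k, f i k) ≤ ∑ i, ∑ k, negMulLog (f i k) := by
  refine Finset.sum_le_sum fun i _ => ?_
  have hs0 : 0 ≤ ∑ k, f i k := Finset.sum_nonneg fun k _ => h i k
  have hexp : negMulLog (∑ k, f i k) = ∑ k, -(f i k * log (∑ k, f i k)) := by
    simp only [negMulLog, neg_mul, ← Finset.sum_neg_distrib, Finset.sum_mul]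
  rw [hexp]
  refine Finset.sum_le_sum fun k _ => ?_
  rcases (h i k).eq_or_lt with h0 | h0
  · simp [← h0]
  · simp only [negMulLog, neg_mul, neg_le_neg_iff]
    have : f i k ≤ ∑ k, f i k := Finset.single_le_sum (fun k _ => h i k) (mem_univ k)
    exact mul_le_mul_of_nonneg_left (Real.log_le_log h0 this) h0.le

private lemma submod {A B C : Type} [Fintype A] [Fintype B] [Fintype C]
    (p : A → B → C → ℝ) (hp : ∀ a b c, 0 ≤ p a b c) (hs : ∑ a, ∑ b, ∑ c, p a b c = 1) :
    (∑ a, ∑ b, ∑ c, negMulLog (p a b c)) + (∑ b, negMulLog (∑ a, ∑ c, p a b c))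
      ≤ (∑ a, ∑ b, negMulLog (∑ c, p a b c)) + (∑ b, ∑ c, negMulLog (∑ a, p a b c)) := by
  have hABnn : ∀ a b, 0 ≤ ∑ c, p a b c := fun a b => Finset.sum_nonneg fun c _ => hp a b c
  have hBCnn : ∀ b c, 0 ≤ ∑ a, p a b c := fun b c => Finset.sum_nonneg fun a _ => hp a b c
  have hBnn : ∀ b, 0 ≤ ∑ a, ∑ c, p a b c := fun b =>
    Finset.sum_nonneg fun a _ => hABnn a b
  have hpleAB : ∀ a b c, p a b c ≤ ∑ c, p a b c := fun a b c =>
    Finset.single_le_sum (fun c _ => hp a b c) (mem_univ c)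
  have hpleBC : ∀ a b c, p a b c ≤ ∑ a, p a b c := fun a b c =>
    Finset.single_le_sum (fun a _ => hp a b c) (mem_univ a)
  have hABleB : ∀ a b, (∑ c, p a b c) ≤ ∑ a, ∑ c, p a b c := fun a b =>
    Finset.single_le_sum (fun a _ => hABnn a b) (mem_univ a)
  have hBCB : ∀ b, (∑ c, ∑ a, p a b c) = ∑ a, ∑ c, p a b c := fun b => Finset.sum_comm
  set P : A × B × C → ℝ := fun x => p x.1 x.2.1 x.2.2 with hP
  set Q : A × B × C → ℝ := fun x =>
    if (∑ a, ∑ c, p a x.2.1 c) = 0 then 0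
    else (∑ c, p x.1 x.2.1 c) * (∑ a, p a x.2.1 x.2.2) / (∑ a, ∑ c, p a x.2.1 c) with hQ
  have hPnn : ∀ x, 0 ≤ P x := fun x => hp _ _ _
  have hQnn : ∀ x, 0 ≤ Q x := by
    rintro ⟨a, b, c⟩
    simp only [hQ]
    split
    · exact le_refl 0
    · have h1 := hABnn a b
      have h2 := hBCnn b c
      have h3 := hBnn b
      positivity
  have hPsum : ∑ x, P x = 1 := by
    simp only [hP, Fintype.sum_prod_type]; exact hs
  have hBsum : ∑ b, ∑ a, ∑ c, p a b c = 1 := by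
    rw [Finset.sum_comm]; exact hs
  have hQsum : ∑ x, Q x ≤ ∑ x, P x := by
    rw [hPsum]
    have h1 : ∑ x, Q x = ∑ b, ∑ a, ∑ c, Q (a, b, c) := by
      simp only [Fintype.sum_prod_type]; exact Finset.sum_comm
    rw [h1]
    have h2 : ∀ b, (∑ a, ∑ c, Q (a, b, c)) ≤ ∑ a, ∑ c, p a b c := by
      intro b
      by_cases hb : (∑ a, ∑ c, p a b c) = 0
      · simp [hQ, hb]
      · have heq : ∑ a, ∑ c, Q (a, b, c)
            = (∑ a, ∑ c, (∑ c', p a b c') * (∑ a', p a' b c)) / (∑ a, ∑ c, p a b c) := by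
          rw [Finset.sum_div]
          refine Finset.sum_congr rfl fun a _ => ?_
          rw [Finset.sum_div]
          refine Finset.sum_congr rfl fun c _ => ?_
          simp only [hQ, if_neg hb]
        rw [heq]
        have hnum : ∑ a, ∑ c, (∑ c', p a b c') * (∑ a', p a' b c)
            = (∑ a, ∑ c, p a b c) * (∑ a, ∑ c, p a b c) := by
          have : ∀ a, ∑ c, (∑ c', p a b c') * (∑ a', p a' b c)
              = (∑ c', p a b c') * (∑ c, ∑ a', p a' b c) := fun a => by
            rw [Finset.mul_sum]
          rw [Finset.sum_congr rfl fun a _ => this a, ← Finset.sum_mul, hBCB]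
        rw [hnum, mul_div_assoc, div_self hb, mul_one]
    calc ∑ b, ∑ a, ∑ c, Q (a, b, c) ≤ ∑ b, ∑ a, ∑ c, p a b c :=
          Finset.sum_le_sum fun b _ => h2 b
      _ = 1 := hBsum
  have hz : ∀ x, Q x = 0 → P x = 0 := by
    rintro ⟨a, b, c⟩ hx
    simp only [hQ] at hx
    simp only [hP]
    by_cases hb : (∑ a, ∑ c, p a b c) = 0
    · exact le_antisymm (((hpleAB a b c).trans (hABleB a b)).trans hb.le) (hp a b c)
    · rw [if_neg hb, div_eq_zero_iff] at hx
      rcases hx with hx | hx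
      · rcases mul_eq_zero.1 hx with h | h
        · exact le_antisymm (h ▸ hpleAB a b c) (hp a b c)
        · exact le_antisymm (h ▸ hpleBC a b c) (hp a b c)
      · exact absurd hx hb
  have key := gibbs P Q hPnn hQnn hQsum hz
  have hlogQ : ∀ x : A × B × C, -(P x * log (Q x)) =
      -(P x * log (∑ c, p x.1 x.2.1 c)) + -(P x * log (∑ a, p a x.2.1 x.2.2))
        + P x * log (∑ a, ∑ c, p a x.2.1 c) := by
    rintro ⟨a, b, c⟩
    rcases (hp a b c).eq_or_lt with h0 | h0
    · simp only [hP, ← h0, zero_mul, neg_zero, add_zero, zero_add]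
    · have hAB : 0 < ∑ c, p a b c := lt_of_lt_of_le h0 (hpleAB a b c)
      have hBC : 0 < ∑ a, p a b c := lt_of_lt_of_le h0 (hpleBC a b c)
      have hB : 0 < ∑ a, ∑ c, p a b c := lt_of_lt_of_le hAB (hABleB a b)
      simp only [hQ, hP, if_neg hB.ne']
      rw [Real.log_div (by positivity) hB.ne', Real.log_mul hAB.ne' hBC.ne']
      ring
  have hsplit : ∑ x, -(P x * log (Q x)) =
      (∑ x : A × B × C, -(P x * log (∑ c, p x.1 x.2.1 c)))
      + (∑ x : A × B × C, -(P x * log (∑ a, p a x.2.1 x.2.2)))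
      + (∑ x : A × B × C, P x * log (∑ a, ∑ c, p a x.2.1 c)) := by
    rw [← Finset.sum_add_distrib, ← Finset.sum_add_distrib]
    exact Finset.sum_congr rfl fun x _ => hlogQ x
  have T1 : ∑ x : A × B × C, -(P x * log (∑ c, p x.1 x.2.1 c))
      = ∑ a, ∑ b, negMulLog (∑ c, p a b c) := by
    simp only [hP, Fintype.sum_prod_type]
    refine Finset.sum_congr rfl fun a _ => Finset.sum_congr rfl fun b _ => ?_
    rw [Finset.sum_neg_distrib, ← Finset.sum_mul]
    simp [negMulLog]
  have T2 : ∑ x : A × B × C, -(P x * log (∑ a, p a x.2.1 x.2.2))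
      = ∑ b, ∑ c, negMulLog (∑ a, p a b c) := by
    simp only [hP, Fintype.sum_prod_type]
    rw [Finset.sum_comm]
    refine Finset.sum_congr rfl fun b _ => ?_
    rw [Finset.sum_comm]
    refine Finset.sum_congr rfl fun c _ => ?_
    rw [Finset.sum_neg_distrib, ← Finset.sum_mul]
    simp [negMulLog]
  have T3 : ∑ x : A × B × C, P x * log (∑ a, ∑ c, p a x.2.1 c)
      = -∑ b, negMulLog (∑ a, ∑ c, p a b c) := by
    simp only [hP, Fintype.sum_prod_type]
    rw [Finset.sum_comm, ← Finset.sum_neg_distrib]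
    refine Finset.sum_congr rfl fun b _ => ?_
    have : ∀ a, ∑ c, p a b c * log (∑ a, ∑ c, p a b c)
        = (∑ c, p a b c) * log (∑ a, ∑ c, p a b c) := fun a => by
      rw [← Finset.sum_mul]
    rw [Finset.sum_congr rfl fun a _ => this a, ← Finset.sum_mul]
    simp [negMulLog]
  have hSfull : ∑ x, negMulLog (P x) = ∑ a, ∑ b, ∑ c, negMulLog (p a b c) := by
    simp only [hP, Fintype.sum_prod_type]
  rw [hSfull, hsplit, T1, T2, T3] at key
  linarith

private lemma shearer_core {A B C : Type} [Fintype A] [Fintype B] [Fintype C]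
    {α β γ : ℝ} (hβ : 0 ≤ β) (hγ : 0 ≤ γ)
    (hαβ : 1 ≤ α + β) (hβγ : 1 ≤ β + γ) (hαγ : 1 ≤ α + γ)
    (q : A → B → C → ℝ) (hp : ∀ a b c, 0 ≤ q a b c) (hs : ∑ a, ∑ b, ∑ c, q a b c = 1) :
    ∑ a, ∑ b, ∑ c, negMulLog (q a b c) ≤
      α * ∑ a, ∑ b, negMulLog (∑ c, q a b c)
      + β * ∑ b, ∑ c, negMulLog (∑ a, q a b c)
      + γ * ∑ a, ∑ c, negMulLog (∑ b, q a b c) := by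
  set S := ∑ a, ∑ b, ∑ c, negMulLog (q a b c) with hS
  set SAB := ∑ a, ∑ b, negMulLog (∑ c, q a b c) with hSAB
  set SBC := ∑ b, ∑ c, negMulLog (∑ a, q a b c) with hSBC
  set SAC := ∑ a, ∑ c, negMulLog (∑ b, q a b c) with hSAC
  set SA := ∑ a, negMulLog (∑ b, ∑ c, q a b c) with hSA
  set SB := ∑ b, negMulLog (∑ a, ∑ c, q a b c) with hSB
  -- submodularity conditioning on B
  have f1 : S + SB ≤ SAB + SBC := submod q hp hs
  -- submodularity conditioning on A
  have f2 : S + SA ≤ SAB + SAC := by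
    have hs' : ∑ b, ∑ a, ∑ c, q a b c = 1 := by rw [Finset.sum_comm]; exact hs
    have h := submod (fun b a c => q a b c) (fun b a c => hp a b c) hs'
    have e1 : ∑ b, ∑ a, ∑ c, negMulLog (q a b c) = S := by
      rw [hS]; exact Finset.sum_comm
    have e2 : ∑ b, ∑ a, negMulLog (∑ c, q a b c) = SAB := by
      rw [hSAB]; exact Finset.sum_comm
    rw [e1, e2] at h
    exact h
  -- subadditivity: SAB ≤ SA + SB
  have f3 : SAB ≤ SA + SB := by
    have hs' : ∑ a, ∑ _u : Unit, ∑ b, (∑ c, q a b c) = 1 := by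
      simp only [Fintype.sum_unique]
      rw [← hs]
    have h := submod (fun a (_ : Unit) b => ∑ c, q a b c)
      (fun a _ b => Finset.sum_nonneg fun c _ => hp a b c) hs'
    simp only [Fintype.sum_unique] at h
    have e0 : ∑ a, ∑ b, ∑ c, q a b c = 1 := hs
    rw [e0] at h
    simpa [hSAB, hSA, hSB] using h
  -- monotonicity: SA ≤ SAB and SAB ≤ S
  have f4 : SA ≤ SAB := by
    have h := ent_sum_le (fun a b => ∑ c, q a b c)
      (fun a b => Finset.sum_nonneg fun c _ => hp a b c)
    exact h
  have f5 : SAB ≤ S := by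
    refine Finset.sum_le_sum fun a _ => ?_
    exact ent_sum_le (q a) (hp a)
  -- nonnegativity of SA
  have f6 : 0 ≤ SA := by
    refine Finset.sum_nonneg fun a _ => ?_
    refine negMulLog_nonneg (Finset.sum_nonneg fun b _ => Finset.sum_nonneg fun c _ => hp a b c) ?_
    rw [← hs]
    exact Finset.single_le_sum
      (fun a _ => Finset.sum_nonneg fun b _ => Finset.sum_nonneg fun c _ => hp a b c)
      (mem_univ a)
  have e1 : β * (S + SB - SAB) ≤ β * SBC := mul_le_mul_of_nonneg_left (by linarith) hβ
  have e2 : γ * (S + SA - SAB) ≤ γ * SAC := mul_le_mul_of_nonneg_left (by linarith) hγ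
  have e3 : β * (SAB - SA) ≤ β * SB := mul_le_mul_of_nonneg_left (by linarith) hβ
  have p1 : 0 ≤ (α + β - 1) * (SAB - SA) :=
    mul_nonneg (by linarith) (by linarith)
  have p2 : 0 ≤ (β + γ - 1) * (S - SAB) :=
    mul_nonneg (by linarith) (by linarith)
  have p3 : 0 ≤ (α + γ - 1) * SA :=
    mul_nonneg (by linarith) f6
  nlinarith [e1, e2, e3, p1, p2, p3]

private lemma entropy2_const_half {X : Type} [Fintype X] (hX : Fintype.card X = 2) :
    entropy2 (fun _ : X => (2:ℝ)⁻¹) = 1 := by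
  have h1 : Real.negMulLog (2:ℝ)⁻¹ = Real.log 2 / 2 := by
    rw [Real.negMulLog, Real.log_inv]; ring
  have h2 : ∑ _x : X, Real.negMulLog (2:ℝ)⁻¹ = 2 * (Real.log 2 / 2) := by
    rw [Finset.sum_const, Finset.card_univ, hX, h1]
    simp [nsmul_eq_mul]
  rw [entropy2, h2]
  have : Real.log 2 ≠ 0 := (Real.log_pos one_lt_two).ne'
  field_simp

private lemma entropy2_const_one {X : Type} [Fintype X] :
    entropy2 (fun _ : X => (1:ℝ)) = 0 := by
  simp [entropy2]

end aux

/-- **Shearer's inequality for the triangle:** for nonnegative reals `α, β, γ`,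
the inequality `H[A,B,C] ≤ α·H[A,B] + β·H[B,C] + γ·H[A,C]` holds for every
triple of jointly distributed random variables taking finitely many values
iff `α+β ≥ 1`, `β+γ ≥ 1`, `α+γ ≥ 1`. -/
theorem shearer_triangle (α β γ : ℝ) (hα : 0 ≤ α) (hβ : 0 ≤ β) (hγ : 0 ≤ γ) :
    (∀ (A B C : Type) [Fintype A] [Fintype B] [Fintype C] (p : A × B × C → ℝ),
      (∀ x, 0 ≤ p x) → (∑ x, p x) = 1 →
      entropy2 p ≤
        α * entropy2 (fun ab : A × B => ∑ c, p (ab.1, ab.2, c)) +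
        β * entropy2 (fun bc : B × C => ∑ a, p (a, bc.1, bc.2)) +
        γ * entropy2 (fun ac : A × C => ∑ b, p (ac.1, b, ac.2)))
    ↔ (1 ≤ α + β ∧ 1 ≤ β + γ ∧ 1 ≤ α + γ) := by
  have hL : (0:ℝ) < Real.log 2 := Real.log_pos one_lt_two
  constructor
  · intro h
    have hsum2 : ∀ (X : Type) [Fintype X], Fintype.card X = 2 →
        ∑ _x : X, (2:ℝ)⁻¹ = 1 := by
      intro X _ hX
      rw [Finset.sum_const, Finset.card_univ, hX]
      norm_num
    refine ⟨?_, ?_, ?_⟩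
    · -- B = Bool
      have k := h Unit Bool Unit (fun _ => (2:ℝ)⁻¹) (fun _ => by norm_num)
        (hsum2 _ (by simp))
      rw [show (fun ab : Unit × Bool => ∑ _c : Unit, (2:ℝ)⁻¹) = fun _ => (2:ℝ)⁻¹ from
            funext fun _ => by simp,
          show (fun bc : Bool × Unit => ∑ _a : Unit, (2:ℝ)⁻¹) = fun _ => (2:ℝ)⁻¹ from
            funext fun _ => by simp,
          show (fun ac : Unit × Unit => ∑ _b : Bool, (2:ℝ)⁻¹) = fun _ => (1:ℝ) from
            funext fun _ => by norm_num,
          entropy2_const_half (by simp), entropy2_const_half (by simp),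
          entropy2_const_half (by simp), entropy2_const_one] at k
      linarith
    · -- C = Bool
      have k := h Unit Unit Bool (fun _ => (2:ℝ)⁻¹) (fun _ => by norm_num)
        (hsum2 _ (by simp))
      rw [show (fun ab : Unit × Unit => ∑ _c : Bool, (2:ℝ)⁻¹) = fun _ => (1:ℝ) from
            funext fun _ => by norm_num,
          show (fun bc : Unit × Bool => ∑ _a : Unit, (2:ℝ)⁻¹) = fun _ => (2:ℝ)⁻¹ from
            funext fun _ => by simp,
          entropy2_const_half (by simp), entropy2_const_half (by simp),
          entropy2_const_one] at k
      linarith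
    · -- A = Bool
      have k := h Bool Unit Unit (fun _ => (2:ℝ)⁻¹) (fun _ => by norm_num)
        (hsum2 _ (by simp))
      rw [show (fun ab : Bool × Unit => ∑ _c : Unit, (2:ℝ)⁻¹) = fun _ => (2:ℝ)⁻¹ from
            funext fun _ => by simp,
          show (fun bc : Unit × Unit => ∑ _a : Bool, (2:ℝ)⁻¹) = fun _ => (1:ℝ) from
            funext fun _ => by norm_num,
          entropy2_const_half (by simp), entropy2_const_half (by simp),
          entropy2_const_one] at k
      linarith
  · rintro ⟨hαβ, hβγ, hαγ⟩
    intro A B C _ _ _ p hp hs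
    have hs' : ∑ a, ∑ b, ∑ c, p (a, b, c) = 1 := by
      simpa only [Fintype.sum_prod_type] using hs
    have key := shearer_core hβ hγ hαβ hβγ hαγ (fun a b c => p (a, b, c))
      (fun a b c => hp _) hs'
    simp only [entropy2, Fintype.sum_prod_type]
    rw [show ∀ x y z : ℝ, α * (x / Real.log 2) + β * (y / Real.log 2) + γ * (z / Real.log 2)
        = (α * x + β * y + γ * z) / Real.log 2 from fun x y z => by ring]
    exact div_le_div_of_nonneg_right key hL.le
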